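/- Let A: ℝⁿ → 2^{ℝⁿ} be a maximal monotone operator, i.e., A is monotone and (x₁,y₁) ∈ Gr(A) if and only if ⟨x₁ - x₂, y₁ - y₂⟩ ≥ 0 for all (x₂,y₂) ∈ Gr(A). Then for any compact subset Γ of the interior of the domain D(A) = {x : A(x) ≠ ∅}, the set ⋃_{x ∈ Γ} A(x) is bounded. -/

import Mathlib

open scoped InnerProductSpace
open Metric Bornology Set

/-- A maximal monotone operator on ℝⁿ is locally bounded on the interior of its domain:
for any compact subset `Γ` of the interior of `D(A)`, the set `⋃ x ∈ Γ, A x` is bounded. -/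
theorem maximalMonotone_locally_bounded {n : ℕ}
    (A : EuclideanSpace ℝ (Fin n) → Set (EuclideanSpace ℝ (Fin n)))
    (hmono : ∀ x₁ x₂ y₁ y₂, y₁ ∈ A x₁ → y₂ ∈ A x₂ → 0 ≤ ⟪x₁ - x₂, y₁ - y₂⟫_ℝ)
    (hmax : ∀ x₁ y₁,
      (y₁ ∈ A x₁ ↔ ∀ x₂ y₂, y₂ ∈ A x₂ → 0 ≤ ⟪x₁ - x₂, y₁ - y₂⟫_ℝ))
    (Γ : Set (EuclideanSpace ℝ (Fin n))) (hΓc : IsCompact Γ)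
    (hΓ : Γ ⊆ interior {x | (A x).Nonempty}) :
    Bornology.IsBounded (⋃ x ∈ Γ, A x) := by
  classical
  obtain ⟨δ, hδ, hK⟩ := hΓc.exists_cthickening_subset_open isOpen_interior hΓ
  set K := cthickening δ Γ with hKdef
  have hKc : IsCompact K := hΓc.cthickening
  have hKD : ∀ p ∈ K, (A p).Nonempty := by
    intro p hp
    have h : p ∈ interior {x | (A x).Nonempty} := hK hp
    have h2 : p ∈ {x | (A x).Nonempty} := interior_subset h
    exact h2
  have hcover : K ⊆ ⋃ p ∈ K, ball p (δ/4) := fun p hp =>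
    mem_biUnion hp (mem_ball_self (by linarith))
  obtain ⟨F, hFK, hFfin, hFcov⟩ :=
    hKc.elim_finite_subcover_image (fun p _ => isOpen_ball) hcover
  -- a selection on K
  have hsel : ∀ p : EuclideanSpace ℝ (Fin n), ∃ y, p ∈ K → y ∈ A p := by
    intro p
    by_cases hp : p ∈ K
    · obtain ⟨y, hy⟩ := hKD p hp
      exact ⟨y, fun _ => hy⟩
    · exact ⟨0, fun h => absurd h hp⟩
  choose z hz using hsel
  set C : ℝ := ∑ p ∈ hFfin.toFinset, ‖z p‖ with hCdef
  have hC0 : 0 ≤ C := Finset.sum_nonneg fun p _ => norm_nonneg _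
  have hCle : ∀ p ∈ F, ‖z p‖ ≤ C := by
    intro p hp
    exact Finset.single_le_sum (f := fun p => ‖z p‖)
      (fun q _ => norm_nonneg _) (hFfin.mem_toFinset.mpr hp)
  rw [isBounded_iff_forall_norm_le]
  refine ⟨(5/3) * C, ?_⟩
  intro y hy
  simp only [mem_iUnion, exists_prop] at hy
  obtain ⟨x, hxΓ, hy⟩ := hy
  by_cases hy0 : y = 0
  · simp [hy0]; positivity
  have hny : (0:ℝ) < ‖y‖ := norm_pos_iff.mpr hy0
  set q : EuclideanSpace ℝ (Fin n) := x + (δ / ‖y‖) • y with hqdef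
  have hqx : dist q x = δ := by
    rw [hqdef, dist_eq_norm, add_sub_cancel_left, norm_smul, Real.norm_eq_abs,
      abs_of_pos (by positivity)]
    field_simp
  have hqK : q ∈ K := by
    apply mem_cthickening_of_dist_le q x δ Γ hxΓ (le_of_eq hqx)
  obtain ⟨p, hpF, hpq⟩ := mem_iUnion₂.mp (hFcov hqK)
  have hpq' : dist q p < δ/4 := mem_ball.mp hpq
  have hzp : z p ∈ A p := hz p (hFK hpF)
  -- monotonicity
  have h1 : 0 ≤ ⟪x - p, y - z p⟫_ℝ := hmono x p y (z p) hy hzp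
  have h1' : ⟪p - x, y⟫_ℝ ≤ ⟪p - x, z p⟫_ℝ := by
    simp only [inner_sub_left, inner_sub_right] at h1 ⊢
    linarith
  have hpx : ‖p - x‖ ≤ δ + δ/4 := by
    calc ‖p - x‖ = dist p x := (dist_eq_norm _ _).symm
    _ ≤ dist p q + dist q x := dist_triangle _ _ _
    _ ≤ δ/4 + δ := by
        rw [dist_comm p q]
        linarith [hpq', le_of_eq hqx]
    _ = δ + δ/4 := by ring
  have h2 : ⟪p - x, z p⟫_ℝ ≤ (δ + δ/4) * C := by
    calc ⟪p - x, z p⟫_ℝ ≤ ‖p - x‖ * ‖z p‖ := real_inner_le_norm _ _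
    _ ≤ (δ + δ/4) * C :=
        mul_le_mul hpx (hCle p hpF) (norm_nonneg _) (by linarith)
  have hsplit : ⟪p - x, y⟫_ℝ = ⟪p - q, y⟫_ℝ + δ * ‖y‖ := by
    have hqx' : ⟪q - x, y⟫_ℝ = δ * ‖y‖ := by
      rw [hqdef, add_sub_cancel_left, real_inner_smul_left,
        real_inner_self_eq_norm_sq]
      field_simp
    have : (p - x : EuclideanSpace ℝ (Fin n)) = (p - q) + (q - x) := by abel
    rw [this, inner_add_left, hqx']
  have h3 : -(δ/4) * ‖y‖ ≤ ⟪p - q, y⟫_ℝ := by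
    have habs : |⟪p - q, y⟫_ℝ| ≤ ‖p - q‖ * ‖y‖ := abs_real_inner_le_norm _ _
    have hn : ‖p - q‖ ≤ δ/4 := by
      rw [← dist_eq_norm, dist_comm]; linarith
    have := neg_abs_le (⟪p - q, y⟫_ℝ)
    nlinarith [norm_nonneg (p - q)]
  -- combine
  have hkey : δ * ‖y‖ - (δ/4) * ‖y‖ ≤ (δ + δ/4) * C := by
    have := h1'.trans h2
    rw [hsplit] at this
    linarith
  nlinarith
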